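/- Let H : ℝ → ℝ be Lipschitz with Lipschitz constant at most C, where C ≥ 1, let V : ℝ → ℝ, let λ ∈ (0,1), R > 0, p ∈ ℝ, and let v : B_{R/λ} → ℝ be differentiable with λv(y) + H(p + v'(y)) + V(y) ≥ 0 and λ|v(y)| ≤ C for all y ∈ B_{R/λ} = (-R/λ, R/λ). Define w(y) = v(y) + (C/R)(y² + 1)^{1/2} + C²/(Rλ). Then λw(y) + H(p + w'(y)) + V(y) ≥ 0 for all y ∈ B_{R/λ}. -/

import Mathlib

open Set Filter Topology

theorem stmt11 (H V v v' : ℝ → ℝ) (C : ℝ) (hC : 1 ≤ C)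
    (hHLip : LipschitzWith (Real.toNNReal C) H)
    (l R p : ℝ) (hl : l ∈ Ioo (0:ℝ) 1) (hR : 0 < R)
    (hv : ∀ y ∈ Ioo (-(R / l)) (R / l),
      HasDerivAt v (v' y) y ∧ 0 ≤ l * v y + H (p + v' y) + V y ∧ l * |v y| ≤ C) :
    ∀ y ∈ Ioo (-(R / l)) (R / l),
      0 ≤ l * (v y + (C / R) * Real.sqrt (y ^ 2 + 1) + C ^ 2 / (R * l)) +
        H (p + deriv (fun x => v x + (C / R) * Real.sqrt (x ^ 2 + 1) + C ^ 2 / (R * l)) y) +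
        V y := by
  intro y hy
  obtain ⟨hvd, hineq, -⟩ := hv y hy
  have hC0 : (0 : ℝ) ≤ C := by linarith
  have hl0 : 0 < l := hl.1
  set s := Real.sqrt (y ^ 2 + 1) with hs
  have hs0 : 0 < s := Real.sqrt_pos.2 (by positivity)
  have hys : |y| ≤ s := by
    rw [hs]
    nlinarith [Real.sq_sqrt (show (0:ℝ) ≤ y ^ 2 + 1 by positivity), abs_nonneg y,
      sq_abs y, Real.sqrt_nonneg (y ^ 2 + 1)]
  have hsq : HasDerivAt (fun x : ℝ => Real.sqrt (x ^ 2 + 1)) (y / s) y := by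
    have h1 : HasDerivAt (fun x : ℝ => x ^ 2 + 1) (2 * y) y := by
      simpa using (hasDerivAt_pow 2 y).add_const 1
    have h2 := (Real.hasDerivAt_sqrt (show (y : ℝ) ^ 2 + 1 ≠ 0 by positivity)).comp y h1
    refine h2.congr_deriv ?_
    rw [hs]
    field_simp
  have hw : HasDerivAt (fun x => v x + (C / R) * Real.sqrt (x ^ 2 + 1) + C ^ 2 / (R * l))
      (v' y + C / R * (y / s)) y := (hvd.add (hsq.const_mul (C / R))).add_const _
  rw [hw.deriv]
  have hHd : |H (p + (v' y + C / R * (y / s))) - H (p + v' y)| ≤ C ^ 2 / R := by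
    have h := hHLip.dist_le_mul (p + (v' y + C / R * (y / s))) (p + v' y)
    rw [Real.dist_eq, Real.dist_eq, Real.coe_toNNReal C hC0] at h
    have h3 : |p + (v' y + C / R * (y / s)) - (p + v' y)| = C / R * (|y| / s) := by
      rw [show p + (v' y + C / R * (y / s)) - (p + v' y) = C / R * (y / s) by ring]
      rw [abs_mul, abs_div, abs_div, abs_of_nonneg (by positivity : (0:ℝ) ≤ C),
        abs_of_nonneg hR.le, abs_of_nonneg hs0.le]
    rw [h3] at h
    have h4 : |y| / s ≤ 1 := (div_le_one hs0).2 hys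
    calc |H (p + (v' y + C / R * (y / s))) - H (p + v' y)| ≤ C * (C / R * (|y| / s)) := h
      _ ≤ C * (C / R * 1) := by
          apply mul_le_mul_of_nonneg_left _ hC0
          exact mul_le_mul_of_nonneg_left h4 (by positivity)
      _ = C ^ 2 / R := by ring
  have h5 : l * (v y + C / R * s + C ^ 2 / (R * l))
      = l * v y + l * (C / R * s) + C ^ 2 / R := by
    field_simp
  have h6 : 0 ≤ l * (C / R * s) := by positivity
  have h7 := (abs_le.1 hHd).1
  linarith
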